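/- Non-measurability of the generalized Vitali set: for rational q with 1/2 < q ≤ 1 (taking μ_1 to be Lebesgue measure when q = 1), any transversal V_q ⊆ [0,1] of the equivalence relation ∼_q is not μ_q-measurable. Specifically, if V_q were measurable, then μ_q([0,1]) ≤ Σ_{k=1}^∞ μ_q(V_q) ≤ μ_q([-2,3]) with μ_q([0,1]) = (1/(1-q))ln(2-q) > 0 and μ_q([-2,3]) = (1/(1-q))ln((4-3q)/(2q-1)) < ∞, a contradiction. -/

import Mathlib

open MeasureTheory

def qAdd (q x y : ℝ) : ℝ := x + y + (1 - q) * x * y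

def qSim (q x y : ℝ) : Prop := ∃ r : ℚ, x = qAdd q y (r : ℝ)

/-- `V` is a transversal of `∼_q` on `[0,1]`. -/
def IsQTransversal (q : ℝ) (V : Set ℝ) : Prop :=
  V ⊆ Set.Icc 0 1 ∧ ∀ x ∈ Set.Icc (0:ℝ) 1, ∃! v, v ∈ V ∧ qSim q x v

/-- The measure with density `1/(1+(1-q)x)` with respect to Lebesgue measure.
For `q = 1` the density is identically `1`, so `qMeasure 1` is Lebesgue measure. -/
noncomputable def qMeasure (q : ℝ) : Measure ℝ :=
  volume.withDensity (fun x => ENNReal.ofReal (1 / (1 + (1 - q) * x)))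

namespace QVitaliAux

open scoped ENNReal

lemma meas_density (q : ℝ) :
    Measurable (fun x : ℝ => ENNReal.ofReal (1 / (1 + (1 - q) * x))) :=
  (measurable_const.div ((measurable_id.const_mul (1 - q)).const_add 1)).ennreal_ofReal

lemma density_comp (q b x : ℝ) (ha : 0 < 1 + (1 - q) * b) :
    ENNReal.ofReal (1 / (1 + (1 - q) * ((1 + (1 - q) * b) * x + b)))
      = ENNReal.ofReal (1 + (1 - q) * b)⁻¹ * ENNReal.ofReal (1 / (1 + (1 - q) * x)) := by
  set a := 1 + (1 - q) * b with hadef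
  have key : 1 + (1 - q) * (a * x + b) = a * (1 + (1 - q) * x) := by rw [hadef]; ring
  rw [key]
  rcases le_or_gt (1 + (1 - q) * x) 0 with h | h
  · rw [ENNReal.ofReal_eq_zero.mpr, ENNReal.ofReal_eq_zero.mpr (one_div_nonpos.mpr h), mul_zero]
    exact one_div_nonpos.mpr (mul_nonpos_of_nonneg_of_nonpos ha.le h)
  · rw [← ENNReal.ofReal_mul (by positivity)]
    congr 1
    field_simp

lemma qmap_mp (q b : ℝ) (ha : 0 < 1 + (1 - q) * b) :
    MeasurePreserving (fun x : ℝ => (1 + (1 - q) * b) * x + b) (qMeasure q) (qMeasure q) := by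
  set a := 1 + (1 - q) * b with hadef
  set f : ℝ → ℝ≥0∞ := fun x => ENNReal.ofReal (1 / (1 + (1 - q) * x)) with hfdef
  have hf : Measurable f := meas_density q
  have hφ : Measurable (fun x : ℝ => a * x + b) := (measurable_id.const_mul a).add_const b
  refine ⟨hφ, ?_⟩
  have hmapvol : Measure.map (fun x : ℝ => a * x + b) volume
      = ENNReal.ofReal a⁻¹ • volume := by
    have h1 : (fun x : ℝ => a * x + b) = (fun y : ℝ => y + b) ∘ (fun x : ℝ => a * x) := rfl
    rw [h1, ← Measure.map_map (measurable_add_const b) (measurable_const_mul a)]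
    have h2 : Measure.map (fun x : ℝ => a * x) volume = ENNReal.ofReal |a⁻¹| • volume :=
      Real.map_volume_mul_left ha.ne'
    rw [h2, Measure.map_smul, map_add_right_eq_self volume b, abs_inv, abs_of_pos ha]
  have hne0 : ENNReal.ofReal a⁻¹ ≠ 0 := (ENNReal.ofReal_pos.mpr (inv_pos.mpr ha)).ne'
  ext s hs
  rw [Measure.map_apply hφ hs]
  show qMeasure q ((fun x => a * x + b) ⁻¹' s) = qMeasure q s
  unfold qMeasure
  rw [withDensity_apply _ (hφ hs), withDensity_apply _ hs]
  have step1 : ∫⁻ x in s, f x = ∫⁻ x, s.indicator f x := (lintegral_indicator hs f).symm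
  have step2 : ∫⁻ x, s.indicator f x ∂(Measure.map (fun x : ℝ => a * x + b) volume)
      = ∫⁻ x, s.indicator f (a * x + b) ∂volume :=
    lintegral_map (hf.indicator hs) hφ
  have step3 : ∀ x : ℝ, s.indicator f (a * x + b)
      = ENNReal.ofReal a⁻¹ * ((fun x => a * x + b) ⁻¹' s).indicator f x := by
    intro x
    by_cases hx : a * x + b ∈ s
    · have hx' : x ∈ (fun x => a * x + b) ⁻¹' s := hx
      rw [Set.indicator_of_mem hx, Set.indicator_of_mem hx']
      exact density_comp q b x ha
    · have hx' : x ∉ (fun x => a * x + b) ⁻¹' s := hx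
      rw [Set.indicator_of_notMem hx, Set.indicator_of_notMem hx', mul_zero]
  apply (ENNReal.mul_right_inj hne0 ENNReal.ofReal_ne_top).mp
  calc ENNReal.ofReal a⁻¹ * ∫⁻ x in (fun x => a * x + b) ⁻¹' s, f x
      = ∫⁻ x, ENNReal.ofReal a⁻¹ * ((fun x => a * x + b) ⁻¹' s).indicator f x := by
        rw [← lintegral_indicator (hφ hs) f, ← lintegral_const_mul _ (hf.indicator (hφ hs))]
    _ = ∫⁻ x, s.indicator f (a * x + b) ∂volume := by
        simp_rw [← step3]
    _ = ∫⁻ x, s.indicator f x ∂(Measure.map (fun x : ℝ => a * x + b) volume) := step2.symm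
    _ = ENNReal.ofReal a⁻¹ * ∫⁻ x, s.indicator f x ∂volume := by
        rw [hmapvol]; simp
    _ = ENNReal.ofReal a⁻¹ * ∫⁻ x in s, f x := by rw [step1]

lemma translate_facts (q b : ℝ) (ha : 0 < 1 + (1 - q) * b) (V : Set ℝ)
    (hm : NullMeasurableSet V (qMeasure q)) :
    NullMeasurableSet ((fun x => (1 + (1 - q) * b) * x + b) '' V) (qMeasure q) ∧
    qMeasure q ((fun x => (1 + (1 - q) * b) * x + b) '' V) = qMeasure q V := by
  have hane : (1 + (1 - q) * b) ≠ 0 := ha.ne'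
  have hval : 1 + (1 - q) * (-b / (1 + (1 - q) * b)) = (1 + (1 - q) * b)⁻¹ := by
    field_simp
    ring
  have ha' : (0:ℝ) < 1 + (1 - q) * (-b / (1 + (1 - q) * b)) := by
    rw [hval]; exact inv_pos.mpr ha
  have hmp' := qmap_mp q (-b / (1 + (1 - q) * b)) ha'
  have hLI : Function.LeftInverse
      (fun x => (1 + (1 - q) * (-b / (1 + (1 - q) * b))) * x + (-b / (1 + (1 - q) * b)))
      (fun x => (1 + (1 - q) * b) * x + b) := by
    intro x
    rw [hval]
    field_simp
    ring
  have hRI : Function.RightInverse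
      (fun x => (1 + (1 - q) * (-b / (1 + (1 - q) * b))) * x + (-b / (1 + (1 - q) * b)))
      (fun x => (1 + (1 - q) * b) * x + b) := by
    intro x
    rw [hval]
    field_simp
    ring
  have himg : (fun x => (1 + (1 - q) * b) * x + b) '' V
      = (fun x => (1 + (1 - q) * (-b / (1 + (1 - q) * b))) * x
          + (-b / (1 + (1 - q) * b))) ⁻¹' V :=
    congrFun (Set.image_eq_preimage_of_inverse hLI hRI) V
  rw [himg]
  exact ⟨hm.preimage hmp'.quasiMeasurePreserving, hmp'.measure_preimage hm⟩

end QVitaliAux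

/-- Non-measurability of the generalized Vitali set for `1/2 < q ≤ 1`. -/
theorem qVitali_not_measurable (q : ℚ) (hq : 1/2 < q) (hq1 : q ≤ 1)
    (V : Set ℝ) (hV : IsQTransversal (q:ℝ) V) :
    ¬ NullMeasurableSet V (qMeasure (q:ℝ)) := by
  intro hmeas
  obtain ⟨hVsub, hVuniq⟩ := hV
  have hq' : (1:ℝ)/2 < (q:ℝ) := by
    have h := (Rat.cast_lt (K := ℝ)).mpr hq
    push_cast at h
    linarith
  have hq1' : (q:ℝ) ≤ 1 := by exact_mod_cast hq1
  have hc0 : (0:ℝ) ≤ 1 - (q:ℝ) := by linarith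
  have hc2 : (1:ℝ) - (q:ℝ) < 1/2 := by linarith
  set μ := qMeasure (q:ℝ) with hμdef
  -- the index type: rationals of absolute value at most 1
  let I := {r : ℚ // |(r:ℝ)| ≤ 1}
  have hapos : ∀ r : I, (0:ℝ) < 1 + (1 - (q:ℝ)) * ((r:ℚ):ℝ) := by
    rintro ⟨r, hr⟩
    obtain ⟨h1, h2⟩ := abs_le.mp hr
    nlinarith [mul_nonneg hc0 (by linarith : (0:ℝ) ≤ (r:ℝ) + 1)]
  -- the translated copies of V
  set W : I → Set ℝ :=
    fun r => (fun x => (1 + (1 - (q:ℝ)) * ((r:ℚ):ℝ)) * x + ((r:ℚ):ℝ)) '' V with hWdef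
  have hmeasW : ∀ r : I, NullMeasurableSet (W r) μ :=
    fun r => (QVitaliAux.translate_facts (q:ℝ) _ (hapos r) V hmeas).1
  have hμW : ∀ r : I, μ (W r) = μ V :=
    fun r => (QVitaliAux.translate_facts (q:ℝ) _ (hapos r) V hmeas).2
  -- covering of [0,1]
  have hcov : Set.Icc (0:ℝ) 1 ⊆ ⋃ r : I, W r := by
    intro x hx
    obtain ⟨v, ⟨hvV, t, hxt⟩, -⟩ := hVuniq x hx
    obtain ⟨hv0, hv1⟩ := hVsub hvV
    obtain ⟨hx0, hx1⟩ := hx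
    simp only [qAdd] at hxt
    have hvpos : (0:ℝ) < 1 + (1 - (q:ℝ)) * v := by nlinarith [mul_nonneg hc0 hv0]
    have h1 : (t:ℝ) * (1 + (1 - (q:ℝ)) * v) = x - v := by linear_combination -hxt
    have habs : |(t:ℝ)| ≤ 1 := by
      have h2 : |(t:ℝ)| * (1 + (1 - (q:ℝ)) * v) = |x - v| := by
        rw [← abs_of_pos hvpos, ← abs_mul, h1]
      have h3 : |x - v| ≤ 1 := abs_le.mpr ⟨by linarith, by linarith⟩
      nlinarith [abs_nonneg (t:ℝ), mul_nonneg (abs_nonneg (t:ℝ)) (mul_nonneg hc0 hv0)]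
    refine Set.mem_iUnion.mpr ⟨⟨t, habs⟩, v, hvV, ?_⟩
    show (1 + (1 - (q:ℝ)) * (t:ℝ)) * v + (t:ℝ) = x
    linear_combination -hxt
  -- the translated copies are contained in [-2, 3]
  have hsub23 : ∀ r : I, W r ⊆ Set.Icc (-2:ℝ) 3 := by
    rintro ⟨r, hr⟩ y ⟨v, hvV, rfl⟩
    obtain ⟨hv0, hv1⟩ := hVsub hvV
    obtain ⟨h1, h2⟩ := abs_le.mp hr
    have hA : (0:ℝ) ≤ (1 - (q:ℝ)) * v := mul_nonneg hc0 hv0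
    have hB : (1 - (q:ℝ)) * v ≤ 1/2 := by nlinarith
    constructor
    · show (-2:ℝ) ≤ (1 + (1 - (q:ℝ)) * (r:ℝ)) * v + (r:ℝ)
      nlinarith [mul_le_mul_of_nonneg_left h1 hA, mul_le_mul_of_nonneg_left h2 hA]
    · show (1 + (1 - (q:ℝ)) * (r:ℝ)) * v + (r:ℝ) ≤ 3
      nlinarith [mul_le_mul_of_nonneg_left h1 hA, mul_le_mul_of_nonneg_left h2 hA]
  -- pairwise disjointness
  have hdisj : Pairwise (Function.onFun Disjoint W) := by
    rintro ⟨r, hr⟩ ⟨r', hr'⟩ hrr'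
    rw [Function.onFun, Set.disjoint_left]
    rintro y ⟨v, hvV, rfl⟩ ⟨v', hv'V, hy⟩
    -- hy : (1 + (1-q) r') v' + r' = (1 + (1-q) r) v + r
    have har : (0:ℝ) < 1 + (1 - (q:ℝ)) * (r:ℝ) := hapos ⟨r, hr⟩
    have har' : (0:ℝ) < 1 + (1 - (q:ℝ)) * (r':ℝ) := hapos ⟨r', hr'⟩
    have harq : ((1 + (1 - q) * r : ℚ) : ℝ) = 1 + (1 - (q:ℝ)) * (r:ℝ) := by push_cast; ring
    have harne : (1 + (1 - q) * r : ℚ) ≠ 0 := by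
      intro h
      rw [← harq] at har
      rw [h] at har
      simp at har
    set tq : ℚ := (r' - r) / (1 + (1 - q) * r) with htq
    obtain ⟨hv0, hv1⟩ := hVsub hvV
    obtain ⟨hv'0, hv'1⟩ := hVsub hv'V
    have hsim : v = qAdd (q:ℝ) v' (tq:ℝ) := by
      have htqc : (tq:ℝ) = ((r':ℝ) - (r:ℝ)) / (1 + (1 - (q:ℝ)) * (r:ℝ)) := by
        rw [htq]; push_cast; ring_nf
      simp only [qAdd, htqc]
      have hD : (1 + (1 - (q:ℝ)) * (r:ℝ)) ≠ 0 := har.ne'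
      apply mul_right_cancel₀ hD
      have hd := div_mul_cancel₀ ((r':ℝ) - (r:ℝ)) hD
      linear_combination -hy - (1 + (1 - (q:ℝ)) * v') * hd
    obtain ⟨w, hw, huniq⟩ := hVuniq v (hVsub hvV)
    have h1 := huniq v' ⟨hv'V, tq, hsim⟩
    have h2 := huniq v ⟨hvV, 0, by simp [qAdd]⟩
    have hvv' : v' = v := h1.trans h2.symm
    rw [hvv'] at hy
    have hbase : (0:ℝ) < 1 + (1 - (q:ℝ)) * v := by nlinarith [mul_nonneg hc0 hv0]
    have hrr : (r':ℝ) * (1 + (1 - (q:ℝ)) * v) = (r:ℝ) * (1 + (1 - (q:ℝ)) * v) := by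
      linear_combination hy
    have : (r':ℝ) = (r:ℝ) := mul_right_cancel₀ hbase.ne' hrr
    exact hrr' (Subtype.ext (by exact_mod_cast this.symm))
  -- the index type is infinite
  have hinf : Infinite I := by
    apply Infinite.of_injective (fun n : ℕ => (⟨((n:ℚ) + 2)⁻¹, by
      have h2 : (0:ℝ) < (n:ℝ) + 2 := by positivity
      have hcast : ((((n:ℚ) + 2)⁻¹ : ℚ) : ℝ) = ((n:ℝ) + 2)⁻¹ := by push_cast; ring
      rw [hcast, abs_of_nonneg (inv_nonneg.mpr h2.le)]
      nlinarith [mul_inv_cancel₀ h2.ne', inv_nonneg.mpr h2.le]⟩ : I))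
    intro n m h
    have h1 : ((n:ℚ) + 2)⁻¹ = ((m:ℚ) + 2)⁻¹ := Subtype.ext_iff.mp h
    rw [inv_inj] at h1
    have : (n:ℚ) = (m:ℚ) := by linarith
    exact_mod_cast this
  -- measure computations
  have hμ01 : 0 < μ (Set.Icc (0:ℝ) 1) := by
    have hb : ENNReal.ofReal (1/2) * volume (Set.Icc (0:ℝ) 1) ≤ μ (Set.Icc (0:ℝ) 1) := by
      rw [hμdef, qMeasure, withDensity_apply _ measurableSet_Icc, ← setLIntegral_const]
      apply setLIntegral_mono (QVitaliAux.meas_density (q:ℝ))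
      intro x hx
      obtain ⟨hx0, hx1⟩ := hx
      have hd0 : (0:ℝ) < 1 + (1 - (q:ℝ)) * x := by nlinarith [mul_nonneg hc0 hx0]
      have hd2 : 1 + (1 - (q:ℝ)) * x ≤ 2 := by nlinarith [mul_nonneg hc0 hx0]
      exact ENNReal.ofReal_le_ofReal (by
        calc (1:ℝ)/2 ≤ 1/(1 + (1 - (q:ℝ)) * x) := one_div_le_one_div_of_le hd0 hd2
        )
    have : (0:ENNReal) < ENNReal.ofReal (1/2) * volume (Set.Icc (0:ℝ) 1) := by
      rw [Real.volume_Icc]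
      norm_num
    exact lt_of_lt_of_le this hb
  have hμ23 : μ (Set.Icc (-2:ℝ) 3) < ⊤ := by
    have hb : μ (Set.Icc (-2:ℝ) 3)
        ≤ ENNReal.ofReal (1/(2*(q:ℝ) - 1)) * volume (Set.Icc (-2:ℝ) 3) := by
      rw [hμdef, qMeasure, withDensity_apply _ measurableSet_Icc, ← setLIntegral_const]
      apply setLIntegral_mono measurable_const
      intro x hx
      obtain ⟨hx0, hx1⟩ := hx
      have hge : 2*(q:ℝ) - 1 ≤ 1 + (1 - (q:ℝ)) * x := by
        nlinarith [mul_le_mul_of_nonneg_left hx0 hc0]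
      have hpos : (0:ℝ) < 2*(q:ℝ) - 1 := by linarith
      exact ENNReal.ofReal_le_ofReal (one_div_le_one_div_of_le hpos hge)
    refine lt_of_le_of_lt hb ?_
    rw [Real.volume_Icc]
    exact ENNReal.mul_lt_top ENNReal.ofReal_lt_top ENNReal.ofReal_lt_top
  -- sum over the disjoint family
  have hUnion : μ (⋃ r : I, W r) = ∑' r : I, μ (W r) :=
    measure_iUnion₀ (fun i j hij => (hdisj hij).aedisjoint) hmeasW
  rcases eq_or_ne (μ V) 0 with h0 | h0
  · have hz : ∑' r : I, μ (W r) = 0 := by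
      rw [tsum_congr hμW, h0, tsum_zero]
    have hle : μ (Set.Icc (0:ℝ) 1) ≤ μ (⋃ r : I, W r) := measure_mono hcov
    rw [hUnion, hz] at hle
    exact absurd (le_antisymm hle zero_le) hμ01.ne'
  · have htop : ∑' r : I, μ (W r) = ⊤ := by
      rw [tsum_congr hμW]
      exact ENNReal.tsum_const_eq_top_of_ne_zero h0
    have hle : μ (⋃ r : I, W r) ≤ μ (Set.Icc (-2:ℝ) 3) :=
      measure_mono (Set.iUnion_subset hsub23)
    rw [hUnion, htop, top_le_iff] at hle
    rw [hle] at hμ23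
    exact lt_irrefl _ hμ23
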